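/- arXiv:2203.03406 — 4 statements merged into one kernel-verified Lean document; each statement's English description precedes it below -/
import Mathlib

section
/- Let n ≥ 2 and k be positive integers with k ≥ n-1 and k ≤ 2. Then the geodetic hull number of the Kneser graph K(2n+k,n) equals 3. -/
/-- The Kneser graph `K(m, n)`: vertices are the `n`-element subsets of an `m`-element
ground set, with edges between disjoint sets. -/
def KneserGraph (m n : ℕ) : SimpleGraph {s : Finset (Fin m) // s.card = n} where
  Adj u v := Disjoint u.1 v.1 ∧ u ≠ v
  symm := ⟨fun u v ⟨h, hne⟩ => ⟨h.symm, hne.symm⟩⟩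
  loopless := ⟨fun u ⟨_, h⟩ => h rfl⟩

/-- The geodetic interval `I[u,v]`: all vertices lying on some shortest `u,v`-path. -/
def geodInterval {V : Type*} (G : SimpleGraph V) (u v : V) : Set V :=
  {w | G.dist u w + G.dist w v = G.dist u v}

/-- `I[W] = ⋃_{u,v ∈ W} I[u,v]`. -/
def geodIntervalSet {V : Type*} (G : SimpleGraph V) (W : Set V) : Set V :=
  ⋃ (u ∈ W) (v ∈ W), geodInterval G u v

/-- `W` is a geodetic set if `I[W] = V(G)`. -/
def IsGeodeticSet {V : Type*} (G : SimpleGraph V) (W : Set V) : Prop :=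
  geodIntervalSet G W = Set.univ

/-- `W` is geodetically convex if `I[W] = W`. -/
def IsGConvex {V : Type*} (G : SimpleGraph V) (W : Set V) : Prop :=
  geodIntervalSet G W = W

/-- The geodetic hull `H[W]`: the smallest g-convex set containing `W`. -/
def geodHull {V : Type*} (G : SimpleGraph V) (W : Set V) : Set V :=
  ⋂₀ {C | IsGConvex G C ∧ W ⊆ C}

/-- `W` is a geodetic hull set if `H[W] = V(G)`. -/
def IsGeodHullSet {V : Type*} (G : SimpleGraph V) (W : Set V) : Prop :=
  geodHull G W = Set.univ

/-- The geodetic number: minimum cardinality of a geodetic set. -/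
noncomputable def geodeticNumber {V : Type*} (G : SimpleGraph V) : ℕ :=
  sInf {m | ∃ W : Set V, IsGeodeticSet G W ∧ W.ncard = m}

/-- The geodetic hull number: minimum cardinality of a geodetic hull set. -/
noncomputable def geodHullNumber {V : Type*} (G : SimpleGraph V) : ℕ :=
  sInf {m | ∃ W : Set V, IsGeodHullSet G W ∧ W.ncard = m}

/-- The function `H(n,k)` from the paper. -/
def Hfun (n k : ℕ) : ℕ := if n % k ≤ 1 then n % k + k - 2 else n % k - 2

/-- `p = (⌈(n-1)/(2k)⌉ - 1)·k + 1`, computed in `ℤ`. -/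
def pInt (n k : ℕ) : ℤ := (⌈((n : ℚ) - 1) / (2 * k)⌉ - 1) * k + 1

section HullLemmas
variable {V : Type*} {G : SimpleGraph V} {C W : Set V} {u v w : V}

lemma self_mem_geodInterval (u v : V) : u ∈ geodInterval G u v := by
  simp [geodInterval, SimpleGraph.dist_self]

lemma self_mem_geodInterval' (u v : V) : v ∈ geodInterval G u v := by
  simp [geodInterval, SimpleGraph.dist_self]

lemma isGConvex_iff :
    IsGConvex G C ↔ ∀ u ∈ C, ∀ v ∈ C, geodInterval G u v ⊆ C := by
  constructor
  · intro h u hu v hv w hw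
    rw [IsGConvex] at h
    rw [← h]
    exact Set.mem_biUnion hu (Set.mem_biUnion hv hw)
  · intro h
    apply Set.Subset.antisymm
    · intro w hw
      simp only [geodIntervalSet, Set.mem_iUnion] at hw
      obtain ⟨a, ha, b, hb, hw⟩ := hw
      exact h a ha b hb hw
    · intro c hc
      exact Set.mem_biUnion hc (Set.mem_biUnion hc (self_mem_geodInterval c c))

lemma subset_geodHull : W ⊆ geodHull G W := fun x hx C hC => hC.2 hx

lemma geodHull_subset (hC : IsGConvex G C) (hWC : W ⊆ C) : geodHull G W ⊆ C :=
  Set.sInter_subset_of_mem ⟨hC, hWC⟩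

lemma isGConvex_geodHull : IsGConvex G (geodHull G W) := by
  rw [isGConvex_iff]
  intro a ha b hb w hw C hC
  exact (isGConvex_iff.mp hC.1) a (ha C hC) b (hb C hC) hw

end HullLemmas

abbrev KV (m n : ℕ) := {s : Finset (Fin m) // s.card = n}

section KneserDist
variable {m n : ℕ} (hn : 1 ≤ n) (hm : 3 * n ≤ m + 1)

include hn in
lemma kv_nonempty (u : KV m n) : u.1.Nonempty := by
  rw [← Finset.card_pos, u.2]; omega

lemma kv_adj_of_disj {u v : KV m n} (h : Disjoint u.1 v.1) (hne : u ≠ v) :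
    (KneserGraph m n).Adj u v := ⟨h, hne⟩

include hn in
lemma kv_ne_of_disj {u w : KV m n} (h : Disjoint u.1 w.1) : u ≠ w := by
  rintro rfl
  exact ((kv_nonempty hn u).ne_empty (by simpa using disjoint_self.mp h)).elim
  
include hn hm in
lemma kv_common_nbr {u v : KV m n} (hnd : ¬ Disjoint u.1 v.1) (hne : u ≠ v) :
    ∃ w : KV m n, Disjoint u.1 w.1 ∧ Disjoint w.1 v.1 := by
  have hscard : 1 ≤ (u.1 ∩ v.1).card := by
    rw [Nat.one_le_iff_ne_zero, Ne, Finset.card_eq_zero]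
    exact fun h => hnd (Finset.disjoint_iff_inter_eq_empty.mpr h)
  have hA : (u.1 ∪ v.1).card ≤ 2 * n - 1 := by
    have := Finset.card_union_add_card_inter u.1 v.1
    rw [u.2, v.2] at this; omega
  have hAc : n ≤ (u.1 ∪ v.1)ᶜ.card := by
    rw [Finset.card_compl]
    simp only [Fintype.card_fin]
    omega
  obtain ⟨w, hw, hwcard⟩ := Finset.exists_subset_card_eq hAc
  refine ⟨⟨w, hwcard⟩, ?_, ?_⟩
  · exact Finset.disjoint_left.mpr fun x hx hxw =>
      (Finset.mem_compl.mp (hw hxw)) (Finset.mem_union_left _ hx)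
  · exact Finset.disjoint_left.mpr fun x hx hxv =>
      (Finset.mem_compl.mp (hw hx)) (Finset.mem_union_right _ hxv)

include hn hm in
lemma kv_reachable (u v : KV m n) : (KneserGraph m n).Reachable u v := by
  by_cases hne : u = v
  · exact hne ▸ SimpleGraph.Reachable.refl u
  by_cases hd : Disjoint u.1 v.1
  · exact (kv_adj_of_disj hd hne).reachable
  · obtain ⟨w, h1, h2⟩ := kv_common_nbr hn hm hd hne
    exact ((kv_adj_of_disj h1 (kv_ne_of_disj hn h1)).reachable).trans
      (kv_adj_of_disj h2 (kv_ne_of_disj hn h2.symm).symm).reachable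

include hn hm in
lemma kv_connected : (KneserGraph m n).Connected := by
  have : Nonempty (KV m n) := by
    obtain ⟨s, _, hs⟩ := Finset.exists_subset_card_eq (s := (Finset.univ : Finset (Fin m))) (n := n)
      (by simp only [Finset.card_univ, Fintype.card_fin]; omega)
    exact ⟨⟨s, hs⟩⟩
  exact ⟨fun u v => kv_reachable hn hm u v⟩

include hn hm in
lemma kv_dist_cases (u v : KV m n) :
    (u = v ∧ (KneserGraph m n).dist u v = 0) ∨
    (u ≠ v ∧ Disjoint u.1 v.1 ∧ (KneserGraph m n).dist u v = 1) ∨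
    (u ≠ v ∧ ¬ Disjoint u.1 v.1 ∧ (KneserGraph m n).dist u v = 2) := by
  by_cases hne : u = v
  · subst hne; exact Or.inl ⟨rfl, SimpleGraph.dist_self⟩
  by_cases hd : Disjoint u.1 v.1
  · exact Or.inr (Or.inl ⟨hne, hd, SimpleGraph.dist_eq_one_iff_adj.mpr (kv_adj_of_disj hd hne)⟩)
  · refine Or.inr (Or.inr ⟨hne, hd, ?_⟩)
    obtain ⟨w, h1, h2⟩ := kv_common_nbr hn hm hd hne
    have hle : (KneserGraph m n).dist u v ≤ 2 := by
      have := (kv_connected hn hm).dist_triangle (u := u) (v := w) (w := v)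
      rw [SimpleGraph.dist_eq_one_iff_adj.mpr (kv_adj_of_disj h1 (kv_ne_of_disj hn h1)),
        SimpleGraph.dist_eq_one_iff_adj.mpr
          (kv_adj_of_disj h2 (kv_ne_of_disj hn h2.symm).symm)] at this
      omega
    have h0 : (KneserGraph m n).dist u v ≠ 0 := fun h =>
      hne ((kv_reachable hn hm u v).dist_eq_zero_iff.mp h)
    have h1' : (KneserGraph m n).dist u v ≠ 1 := fun h =>
      hd (SimpleGraph.dist_eq_one_iff_adj.mp h).1
    omega
end KneserDist

section Kneser2
variable {m n : ℕ} (hn : 1 ≤ n) (hm : 3 * n ≤ m + 1)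

include hn hm in
lemma kv_mem_interval {u v w : KV m n} (hw : w ∈ geodInterval (KneserGraph m n) u v) :
    w = u ∨ w = v ∨
      (¬ Disjoint u.1 v.1 ∧ u ≠ v ∧ Disjoint u.1 w.1 ∧ Disjoint w.1 v.1) := by
  have h := hw
  simp only [geodInterval, Set.mem_setOf_eq] at h
  by_cases hwu : w = u
  · exact Or.inl hwu
  by_cases hwv : w = v
  · exact Or.inr (Or.inl hwv)
  refine Or.inr (Or.inr ?_)
  rcases kv_dist_cases hn hm u w with ⟨e, _⟩ | ⟨_, duw, e1⟩ | ⟨_, _, e1⟩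
  · exact absurd e.symm hwu
  all_goals rcases kv_dist_cases hn hm w v with ⟨e, _⟩ | ⟨_, dwv, f1⟩ | ⟨_, _, f1⟩
  all_goals try exact absurd e hwv
  all_goals rcases kv_dist_cases hn hm u v with ⟨rfl, g⟩ | ⟨hne, hd, g⟩ | ⟨hne, hd, g⟩
  all_goals first
    | exact ⟨hd, hne, duw, dwv⟩
    | omega
    | (exfalso; omega)

include hn hm in
lemma kv_mem_interval_of {u v w : KV m n} (hd : ¬ Disjoint u.1 v.1) (hne : u ≠ v)
    (h1 : Disjoint u.1 w.1) (h2 : Disjoint w.1 v.1) :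
    w ∈ geodInterval (KneserGraph m n) u v := by
  simp only [geodInterval, Set.mem_setOf_eq]
  have e2 : (KneserGraph m n).dist u v = 2 := by
    rcases kv_dist_cases hn hm u v with ⟨rfl, _⟩ | ⟨_, d, _⟩ | ⟨_, _, h⟩
    · exact absurd rfl hne
    · exact absurd d hd
    · exact h
  have e1 : (KneserGraph m n).dist u w = 1 := by
    rcases kv_dist_cases hn hm u w with ⟨e, _⟩ | ⟨_, _, h⟩ | ⟨_, d, _⟩
    · exact absurd e (kv_ne_of_disj hn h1)
    · exact h
    · exact absurd h1 d
  have f1 : (KneserGraph m n).dist w v = 1 := by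
    rcases kv_dist_cases hn hm w v with ⟨e, _⟩ | ⟨_, _, h⟩ | ⟨_, d, _⟩
    · exact absurd e (kv_ne_of_disj hn h2)
    · exact h
    · exact absurd h2 d
  omega
end Kneser2

section Pair
variable {m n : ℕ}

lemma inter_card_le {a b : KV m n} (hab : a ≠ b) : (a.1 ∩ b.1).card ≤ n - 1 := by
  have hle : (a.1 ∩ b.1).card ≤ n := by
    have h := Finset.card_le_card (Finset.inter_subset_left (s₁ := a.1) (s₂ := b.1))
    rw [a.2] at h; exact h
  by_contra hc
  have heq : a.1 ∩ b.1 = a.1 :=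
    Finset.eq_of_subset_of_card_le Finset.inter_subset_left (by rw [a.2]; omega)
  have hsub : a.1 ⊆ b.1 := fun x hx => (Finset.mem_inter.mp (heq ▸ hx)).2
  exact hab (Subtype.ext (Finset.eq_of_subset_of_card_le hsub (by rw [a.2, b.2])))

lemma union_eq_of_card {A : Finset (Fin m)} {a b : KV m n} (hn1 : 1 ≤ n) (hab : a ≠ b)
    (ha : a.1 ⊆ A) (hb : b.1 ⊆ A) (hA : A.card ≤ n + 1) : a.1 ∪ b.1 = A := by
  have h1 : (a.1 ∪ b.1).card + (a.1 ∩ b.1).card = 2 * n := by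
    have := Finset.card_union_add_card_inter a.1 b.1
    rw [a.2, b.2] at this; omega
  have h2 := inter_card_le hab
  apply Finset.eq_of_subset_of_card_le (Finset.union_subset ha hb)
  omega

variable (hn2 : 2 ≤ n) (hm : 3 * n ≤ m + 1) (hm2 : m ≤ 2 * n + 2)

include hn2 hm hm2 in
lemma kv_pair_convex (u v : KV m n) :
    ∃ C : Set (KV m n), IsGConvex (KneserGraph m n) C ∧ u ∈ C ∧ v ∈ C ∧ C ≠ Set.univ := by
  have hn : 1 ≤ n := by omega
  have hmn : n ≤ m := by omega
  by_cases hdeq : Disjoint u.1 v.1 ∨ u = v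
  · refine ⟨{u, v}, ?_, by simp, by simp, ?_⟩
    · rw [isGConvex_iff]
      rintro a ha b hb w hw
      rcases kv_mem_interval hn hm hw with rfl | rfl | ⟨hnd, hne, _, _⟩
      · exact ha
      · exact hb
      · exfalso
        simp only [Set.mem_insert_iff, Set.mem_singleton_iff] at ha hb
        rcases ha with rfl | rfl <;> rcases hb with rfl | rfl
        · exact hne rfl
        · rcases hdeq with h | h
          · exact hnd h
          · exact hne (h ▸ rfl)
        · rcases hdeq with h | h
          · exact hnd h.symm
          · exact hne (h ▸ rfl)
        · exact hne rfl
    · intro hC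
      obtain ⟨x, hx⟩ : u.1.Nonempty := by rw [← Finset.card_pos, u.2]; omega
      rcases hdeq with hdisj | rfl
      · obtain ⟨y, hy⟩ : v.1.Nonempty := by rw [← Finset.card_pos, v.2]; omega
        have hyu : y ∉ u.1 := Finset.disjoint_right.mp hdisj hy
        have hcard : (insert y (u.1.erase x)).card = n := by
          rw [Finset.card_insert_of_notMem (fun h => hyu (Finset.mem_of_mem_erase h)),
            Finset.card_erase_of_mem hx, u.2]; omega
        obtain ⟨x', hx'⟩ : (u.1.erase x).Nonempty := by
          rw [← Finset.card_pos, Finset.card_erase_of_mem hx, u.2]; omega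
        have hw := hC ▸ Set.mem_univ (⟨_, hcard⟩ : KV m n)
        rcases hw with hw | hw
        · apply hyu
          have h := congrArg Subtype.val hw
          simp only at h
          rw [← h]; exact Finset.mem_insert_self _ _
        · have h := congrArg Subtype.val hw
          simp only at h
          have hx'w : x' ∈ v.1 := by rw [← h]; exact Finset.mem_insert_of_mem hx'
          exact Finset.disjoint_left.mp hdisj (Finset.mem_of_mem_erase hx') hx'w
      · have hcne : (u.1ᶜ).Nonempty := by
          rw [← Finset.card_pos, Finset.card_compl, u.2]
          simp only [Fintype.card_fin]; omega
        obtain ⟨y, hy⟩ := hcne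
        have hyu : y ∉ u.1 := Finset.mem_compl.mp hy
        have hcard : (insert y (u.1.erase x)).card = n := by
          rw [Finset.card_insert_of_notMem (fun h => hyu (Finset.mem_of_mem_erase h)),
            Finset.card_erase_of_mem hx, u.2]; omega
        have hw := hC ▸ Set.mem_univ (⟨_, hcard⟩ : KV m n)
        apply hyu
        rcases hw with hw | hw <;>
        · have h := congrArg Subtype.val hw
          simp only at h
          rw [← h]; exact Finset.mem_insert_self _ _
  · push_neg at hdeq
    obtain ⟨hnd, hne⟩ := hdeq
    have hs1 : 1 ≤ (u.1 ∩ v.1).card := by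
      rw [Nat.one_le_iff_ne_zero, Ne, Finset.card_eq_zero]
      exact fun h => hnd (Finset.disjoint_iff_inter_eq_empty.mpr h)
    have hsn := inter_card_le hne
    have hAcard : (u.1 ∪ v.1).card + (u.1 ∩ v.1).card = 2 * n := by
      have := Finset.card_union_add_card_inter u.1 v.1
      rw [u.2, v.2] at this; omega
    have hAc : ((u.1 ∪ v.1)ᶜ).card = m - (u.1 ∪ v.1).card := by
      rw [Finset.card_compl]; simp
    by_cases hcase : n - 1 ≤ (u.1 ∩ v.1).card
    · have hAle : (u.1 ∪ v.1).card ≤ n + 1 := by omega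
      have hAcle : ((u.1 ∪ v.1)ᶜ).card ≤ n + 1 := by omega
      refine ⟨{w : KV m n | w.1 ⊆ u.1 ∪ v.1 ∨ w.1 ⊆ (u.1 ∪ v.1)ᶜ}, ?_, ?_, ?_, ?_⟩
      · rw [isGConvex_iff]
        rintro a ha b hb w hw
        rcases kv_mem_interval hn hm hw with rfl | rfl | ⟨hnd', hne', hd1, hd2⟩
        · exact ha
        · exact hb
        · rcases ha with ha | ha <;> rcases hb with hb | hb
          · have hun : a.1 ∪ b.1 = u.1 ∪ v.1 := union_eq_of_card hn hne' ha hb hAle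
            refine Or.inr (fun x hx => Finset.mem_compl.mpr (fun hxA => ?_))
            rw [← hun] at hxA
            rcases Finset.mem_union.mp hxA with h | h
            · exact Finset.disjoint_right.mp hd1 hx h
            · exact Finset.disjoint_left.mp hd2 hx h
          · exact absurd (Finset.disjoint_left.mpr
              (fun x hxa hxb => Finset.mem_compl.mp (hb hxb) (ha hxa))) hnd'
          · exact absurd (Finset.disjoint_left.mpr
              (fun x hxa hxb => Finset.mem_compl.mp (ha hxa) (hb hxb))) hnd'
          · have hun : a.1 ∪ b.1 = (u.1 ∪ v.1)ᶜ := union_eq_of_card hn hne' ha hb hAcle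
            refine Or.inl (fun x hx => by_contra (fun hxA => ?_))
            have hxAc : x ∈ (u.1 ∪ v.1)ᶜ := Finset.mem_compl.mpr hxA
            rw [← hun] at hxAc
            rcases Finset.mem_union.mp hxAc with h | h
            · exact Finset.disjoint_right.mp hd1 hx h
            · exact Finset.disjoint_left.mp hd2 hx h
      · exact Or.inl Finset.subset_union_left
      · exact Or.inl Finset.subset_union_right
      · intro hC
        obtain ⟨x, hx⟩ : (u.1 ∪ v.1).Nonempty := by rw [← Finset.card_pos]; omega
        obtain ⟨y, hy⟩ : ((u.1 ∪ v.1)ᶜ).Nonempty := by rw [← Finset.card_pos]; omega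
        have hxy : x ≠ y := fun h => Finset.mem_compl.mp hy (h ▸ hx)
        obtain ⟨t, hsub, htcard⟩ := Finset.exists_superset_card_eq
          (s := {x, y}) (n := n)
          (by rw [Finset.card_insert_of_notMem (by simpa using hxy), Finset.card_singleton]; omega)
          (by simpa using hmn)
        have hw := hC ▸ Set.mem_univ (⟨t, htcard⟩ : KV m n)
        rcases hw with hw | hw
        · exact Finset.mem_compl.mp hy (hw (hsub (by simp)))
        · exact Finset.mem_compl.mp (hw (hsub (by simp))) hx
    · have hAccard : ((u.1 ∪ v.1)ᶜ).card = n := by omega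
      refine ⟨{u, v, ⟨(u.1 ∪ v.1)ᶜ, hAccard⟩}, ?_, by simp, by simp, ?_⟩
      · rw [isGConvex_iff]
        rintro a ha b hb w hw
        rcases kv_mem_interval hn hm hw with rfl | rfl | ⟨hnd', hne', hd1, hd2⟩
        · exact ha
        · exact hb
        · have hcu : Disjoint ((u.1 ∪ v.1)ᶜ) u.1 := Finset.disjoint_left.mpr
            (fun x hxc hxu => Finset.mem_compl.mp hxc (Finset.mem_union_left _ hxu))
          have hcv : Disjoint ((u.1 ∪ v.1)ᶜ) v.1 := Finset.disjoint_left.mpr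
            (fun x hxc hxv => Finset.mem_compl.mp hxc (Finset.mem_union_right _ hxv))
          simp only [Set.mem_insert_iff, Set.mem_singleton_iff] at ha hb
          have key : (a = u ∧ b = v) ∨ (a = v ∧ b = u) := by
            rcases ha with rfl | rfl | rfl <;> rcases hb with rfl | rfl | rfl
            · exact absurd rfl hne'
            · exact Or.inl ⟨rfl, rfl⟩
            · exact absurd hcu.symm hnd'
            · exact Or.inr ⟨rfl, rfl⟩
            · exact absurd rfl hne'
            · exact absurd hcv.symm hnd'
            · exact absurd hcu hnd'
            · exact absurd hcv hnd'
            · exact absurd rfl hne'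
          have hwA : w.1 ⊆ (u.1 ∪ v.1)ᶜ := by
            intro x hx
            refine Finset.mem_compl.mpr (fun hxA => ?_)
            rcases key with ⟨rfl, rfl⟩ | ⟨rfl, rfl⟩ <;>
              rcases Finset.mem_union.mp hxA with h | h
            · exact Finset.disjoint_right.mp hd1 hx h
            · exact Finset.disjoint_left.mp hd2 hx h
            · exact Finset.disjoint_left.mp hd2 hx h
            · exact Finset.disjoint_right.mp hd1 hx h
          have hwc : w = ⟨(u.1 ∪ v.1)ᶜ, hAccard⟩ := Subtype.ext
            (Finset.eq_of_subset_of_card_le hwA (by rw [w.2, hAccard]))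
          rw [hwc]
          simp
      · intro hC
        have hcs := Finset.card_sdiff_add_card_inter u.1 v.1
        rw [u.2] at hcs
        obtain ⟨x, hxmem⟩ : (u.1 \ v.1).Nonempty := by rw [← Finset.card_pos]; omega
        have hxu : x ∈ u.1 := (Finset.mem_sdiff.mp hxmem).1
        have hxc : x ∉ (u.1 ∪ v.1)ᶜ := fun h =>
          Finset.mem_compl.mp h (Finset.mem_union_left _ hxu)
        obtain ⟨z, hz⟩ : ((u.1 ∪ v.1)ᶜ).Nonempty := by rw [← Finset.card_pos]; omega
        have hcard : (insert x (((u.1 ∪ v.1)ᶜ).erase z)).card = n := by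
          rw [Finset.card_insert_of_notMem (fun h => hxc (Finset.mem_of_mem_erase h)),
            Finset.card_erase_of_mem hz, hAccard]; omega
        obtain ⟨z', hz'⟩ : (((u.1 ∪ v.1)ᶜ).erase z).Nonempty := by
          rw [← Finset.card_pos, Finset.card_erase_of_mem hz, hAccard]; omega
        have hz'c : z' ∈ (u.1 ∪ v.1)ᶜ := Finset.mem_of_mem_erase hz'
        have hw := hC ▸ Set.mem_univ (⟨_, hcard⟩ : KV m n)
        rcases hw with hw | hw | hw
        · have h := congrArg Subtype.val hw
          simp only at h
          have : z' ∈ u.1 := by rw [← h]; exact Finset.mem_insert_of_mem hz'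
          exact Finset.mem_compl.mp hz'c (Finset.mem_union_left _ this)
        · have h := congrArg Subtype.val hw
          simp only at h
          have : z' ∈ v.1 := by rw [← h]; exact Finset.mem_insert_of_mem hz'
          exact Finset.mem_compl.mp hz'c (Finset.mem_union_right _ this)
        · have h := congrArg Subtype.val hw
          simp only at h
          have : x ∈ (u.1 ∪ v.1)ᶜ := by rw [← h]; exact Finset.mem_insert_self _ _
          exact hxc this
end Pair

section Step
variable {m n : ℕ}

def kstep (m n : ℕ) (S : Finset (KV m n)) : Finset (KV m n) :=
  S ∪ Finset.univ.filter (fun w =>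
    ∃ a ∈ S, ∃ b ∈ S, ¬ Disjoint a.1 b.1 ∧ a ≠ b ∧ Disjoint a.1 w.1 ∧ Disjoint w.1 b.1)

lemma kstep_subset (hn : 1 ≤ n) (hm : 3 * n ≤ m + 1) {C : Set (KV m n)}
    (hC : IsGConvex (KneserGraph m n) C) {S : Finset (KV m n)} (hS : ↑S ⊆ C) :
    ↑(kstep m n S) ⊆ C := by
  intro w hw
  simp only [kstep, Finset.coe_union, Set.mem_union, Finset.mem_coe,
    Finset.mem_filter, Finset.mem_univ, true_and] at hw
  rcases hw with hw | ⟨a, haS, b, hbS, hnd, hne, hd1, hd2⟩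
  · exact hS hw
  · exact (isGConvex_iff.mp hC) a (hS haS) b (hS hbS)
      (kv_mem_interval_of hn hm hnd hne hd1 hd2)

lemma kv_hull_univ (hn : 1 ≤ n) (hm : 3 * n ≤ m + 1) (S0 : Finset (KV m n))
    (hstep : kstep m n (kstep m n (kstep m n S0)) = Finset.univ) :
    geodHull (KneserGraph m n) ↑S0 = Set.univ := by
  apply Set.eq_univ_of_univ_subset
  have h1 := kstep_subset hn hm (isGConvex_geodHull (W := (↑S0 : Set (KV m n))))
    (subset_geodHull)
  have h2 := kstep_subset hn hm (isGConvex_geodHull (W := (↑S0 : Set (KV m n)))) h1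
  have h3 := kstep_subset hn hm (isGConvex_geodHull (W := (↑S0 : Set (KV m n)))) h2
  rw [hstep] at h3
  simpa using h3

lemma kv_hullNumber_eq_three {n k : ℕ} (hn : 2 ≤ n) (hk : 0 < k) (hkn : n - 1 ≤ k)
    (hk2 : k ≤ 2) (S0 : Finset (KV (2 * n + k) n)) (hcard : S0.card = 3)
    (hstep : kstep _ n (kstep _ n (kstep _ n S0)) = Finset.univ) :
    geodHullNumber (KneserGraph (2 * n + k) n) = 3 := by
  have hn1 : 1 ≤ n := by omega
  have hm : 3 * n ≤ (2 * n + k) + 1 := by omega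
  have hm2 : 2 * n + k ≤ 2 * n + 2 := by omega
  have hmem : 3 ∈ {m | ∃ W : Set (KV (2 * n + k) n),
      IsGeodHullSet (KneserGraph (2 * n + k) n) W ∧ W.ncard = m} :=
    ⟨↑S0, kv_hull_univ hn1 hm S0 hstep, by rw [Set.ncard_coe_finset, hcard]⟩
  apply le_antisymm
  · exact Nat.sInf_le hmem
  · apply le_csInf ⟨3, hmem⟩
    rintro b ⟨W, hWhull, rfl⟩
    by_contra hb
    push_neg at hb
    have hW2 : W.ncard ≤ 2 := by omega
    obtain ⟨u, v, hWuv⟩ : ∃ u v : KV (2 * n + k) n, W ⊆ {u, v} := by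
      interval_cases h : W.ncard
      · rw [Set.ncard_eq_zero W.toFinite] at h
        obtain ⟨s, _, hs⟩ := Finset.exists_subset_card_eq
          (s := (Finset.univ : Finset (Fin (2 * n + k)))) (n := n)
          (by simp only [Finset.card_univ, Fintype.card_fin]; omega)
        exact ⟨⟨s, hs⟩, ⟨s, hs⟩, h ▸ Set.empty_subset _⟩
      · obtain ⟨a, rfl⟩ := Set.ncard_eq_one.mp h
        exact ⟨a, a, by simp⟩
      · obtain ⟨a, b, _, rfl⟩ := Set.ncard_eq_two.mp h
        exact ⟨a, b, subset_rfl⟩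
    obtain ⟨C, hCconv, hCu, hCv, hCne⟩ := kv_pair_convex hn hm hm2 u v
    apply hCne
    apply Set.eq_univ_of_univ_subset
    rw [← hWhull]
    exact geodHull_subset hCconv (hWuv.trans (by
      intro x hx
      rcases hx with rfl | hx
      · exact hCu
      · exact (Set.mem_singleton_iff.mp hx) ▸ hCv))
end Step

set_option maxRecDepth 100000 in
set_option maxHeartbeats 4000000 in
theorem geodHullNumber_eq_three
    (n k : ℕ) (hn : 2 ≤ n) (hk : 0 < k) (hkn : n - 1 ≤ k) (hk2 : k ≤ 2) :
    geodHullNumber (KneserGraph (2 * n + k) n) = 3 := by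
  have hcase : (n = 2 ∧ k = 1) ∨ (n = 2 ∧ k = 2) ∨ (n = 3 ∧ k = 2) := by omega
  rcases hcase with ⟨rfl, rfl⟩ | ⟨rfl, rfl⟩ | ⟨rfl, rfl⟩
  · exact kv_hullNumber_eq_three (by norm_num) (by norm_num) (by norm_num) (by norm_num)
      ({(⟨{0,1}, by decide⟩ : KV (2 * 2 + 1) 2), (⟨{0,2}, by decide⟩ : KV (2 * 2 + 1) 2), (⟨{0,3}, by decide⟩ : KV (2 * 2 + 1) 2)} :
        Finset (KV (2 * 2 + 1) 2))
      (by decide) (by decide)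
  · exact kv_hullNumber_eq_three (by norm_num) (by norm_num) (by norm_num) (by norm_num)
      ({(⟨{0,1}, by decide⟩ : KV (2 * 2 + 2) 2), (⟨{0,2}, by decide⟩ : KV (2 * 2 + 2) 2), (⟨{0,3}, by decide⟩ : KV (2 * 2 + 2) 2)} :
        Finset (KV (2 * 2 + 2) 2))
      (by decide) (by decide)
  · exact kv_hullNumber_eq_three (by norm_num) (by norm_num) (by norm_num) (by norm_num)
      ({(⟨{0,1,2}, by decide⟩ : KV (2 * 3 + 2) 3), (⟨{0,1,3}, by decide⟩ : KV (2 * 3 + 2) 3), (⟨{0,1,4}, by decide⟩ : KV (2 * 3 + 2) 3)} :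
        Finset (KV (2 * 3 + 2) 3))
      (by decide) (by decide)
end

section
/- Let n ≥ 2 and k be positive integers with k ≥ n-1 and k > 2, and let x and y be vertices of the Kneser graph K(2n+k,n) with |x ∩ y| = n-1. Then {x, y} is a geodetic hull set of K(2n+k,n). -/
lemma kneser_step {m n : ℕ} (hn : 1 ≤ n) {C : Set (KV m n)}
    (hC : IsGConvex (KneserGraph m n) C) {u v : KV m n}
    (hu : u ∈ C) (hv : v ∈ C) (hne : u ≠ v) (hint : (u.1 ∩ v.1).Nonempty)
    (t : KV m n) (htu : Disjoint u.1 t.1) (htv : Disjoint v.1 t.1) :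
    t ∈ C := by
  have hut : u ≠ t := by
    rintro rfl
    have h := u.2
    rw [disjoint_self.mp htu, Finset.bot_eq_empty] at h
    simp only [Finset.card_empty] at h
    omega
  have hvt : v ≠ t := by
    rintro rfl
    have h := v.2
    rw [disjoint_self.mp htv, Finset.bot_eq_empty] at h
    simp only [Finset.card_empty] at h
    omega
  have hA1 : (KneserGraph m n).Adj u t := ⟨htu, hut⟩
  have hA2 : (KneserGraph m n).Adj t v := ⟨htv.symm, hvt.symm⟩
  let p : (KneserGraph m n).Walk u v := SimpleGraph.Walk.cons hA1 hA2.toWalk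
  have hle : (KneserGraph m n).dist u v ≤ 2 := by
    have h := SimpleGraph.dist_le p
    simpa [p] using h
  have hreach : (KneserGraph m n).Reachable u v := ⟨p⟩
  have h0 : 0 < (KneserGraph m n).dist u v := hreach.pos_dist_of_ne hne
  have h1 : (KneserGraph m n).dist u v ≠ 1 := by
    intro h
    have hadj := SimpleGraph.dist_eq_one_iff_adj.mp h
    have hd : Disjoint u.1 v.1 := hadj.1
    rw [Finset.disjoint_iff_inter_eq_empty] at hd
    rw [hd] at hint
    exact Finset.not_nonempty_empty hint
  have hd2 : (KneserGraph m n).dist u v = 2 := by omega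
  have hd1 : (KneserGraph m n).dist u t = 1 := SimpleGraph.dist_eq_one_iff_adj.mpr hA1
  have hd1' : (KneserGraph m n).dist t v = 1 := SimpleGraph.dist_eq_one_iff_adj.mpr hA2
  have ht' : t ∈ geodIntervalSet (KneserGraph m n) C := by
    unfold geodIntervalSet
    refine Set.mem_iUnion₂.mpr ⟨u, hu, Set.mem_iUnion₂.mpr ⟨v, hv, ?_⟩⟩
    show (KneserGraph m n).dist u t + (KneserGraph m n).dist t v = (KneserGraph m n).dist u v
    rw [hd1, hd1', hd2]
  rwa [hC] at ht'

lemma kneser_swap {m n : ℕ} (hn : 2 ≤ n) {C : Set (KV m n)}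
    (hC : IsGConvex (KneserGraph m n) C) {F : Finset (Fin m)} {g1 g2 : Fin m}
    (hF : F.card = n - 1) (hg1 : g1 ∉ F) (hg2 : g2 ∉ F) (hgg : g1 ≠ g2)
    {u v : KV m n} (hu : u ∈ C) (hv : v ∈ C)
    (hu1 : u.1 = insert g1 F) (hv1 : v.1 = insert g2 F)
    (w : KV m n) (hwF : Disjoint w.1 F) (hwg1 : g1 ∉ w.1) (hwg2 : g2 ∉ w.1) :
    w ∈ C := by
  have hg1u : g1 ∈ u.1 := by rw [hu1]; exact Finset.mem_insert_self _ _
  have hg1v : g1 ∉ v.1 := by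
    rw [hv1]
    simp only [Finset.mem_insert]
    rintro (h | h)
    · exact hgg h
    · exact hg1 h
  have hne : u ≠ v := fun h => hg1v (h ▸ hg1u)
  have hFne : F.Nonempty := Finset.card_pos.mp (by omega)
  obtain ⟨a, ha⟩ := hFne
  have hint : (u.1 ∩ v.1).Nonempty :=
    ⟨a, Finset.mem_inter.mpr ⟨by rw [hu1]; exact Finset.mem_insert_of_mem ha,
        by rw [hv1]; exact Finset.mem_insert_of_mem ha⟩⟩
  refine kneser_step (by omega) hC hu hv hne hint w ?_ ?_
  · rw [Finset.disjoint_left]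
    intro b hb hbw
    rw [hu1] at hb
    rcases Finset.mem_insert.mp hb with rfl | hbF
    · exact hwg1 hbw
    · exact Finset.disjoint_right.mp hwF hbF hbw
  · rw [Finset.disjoint_left]
    intro b hb hbw
    rw [hv1] at hb
    rcases Finset.mem_insert.mp hb with rfl | hbF
    · exact hwg2 hbw
    · exact Finset.disjoint_right.mp hwF hbF hbw

theorem pair_isGeodHullSet_of_k_gt_two
    (n k : ℕ) (hn : 2 ≤ n) (hk : 0 < k) (hkn : n - 1 ≤ k) (hk2 : 2 < k)
    (x y : {s : Finset (Fin (2 * n + k)) // s.card = n}) (hxy : (x.1 ∩ y.1).card = n - 1) :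
    IsGeodHullSet (KneserGraph (2 * n + k) n) {x, y} := by
  classical
  unfold IsGeodHullSet geodHull
  rw [Set.sInter_eq_univ]
  rintro C ⟨hC, hsub⟩
  have hx : x ∈ C := hsub (Set.mem_insert _ _)
  have hy : y ∈ C := hsub (Set.mem_insert_iff.mpr (Or.inr rfl))
  have hxyne : x ≠ y := by
    intro h
    rw [h, Finset.inter_self, y.2] at hxy
    omega
  have hint : (x.1 ∩ y.1).Nonempty := Finset.card_pos.mp (by rw [hxy]; omega)
  have hUcard : (x.1 ∪ y.1).card = n + 1 := by
    have h := Finset.card_union_add_card_inter x.1 y.1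
    rw [hxy, x.2, y.2] at h
    omega
  set Z : Finset (Fin (2 * n + k)) := (x.1 ∪ y.1)ᶜ with hZ
  have hZcard : Z.card = n + k - 1 := by
    rw [hZ, Finset.card_compl, hUcard, Fintype.card_fin]
    omega
  -- Step A: every n-subset of Z is in C
  have hA : ∀ t : KV (2 * n + k) n, t.1 ⊆ Z → t ∈ C := by
    intro t ht
    refine kneser_step (by omega) hC hx hy hxyne hint t ?_ ?_
    · rw [Finset.disjoint_right]
      intro a hat hax
      exact (Finset.mem_compl.mp (ht hat)) (Finset.mem_union_left _ hax)
    · rw [Finset.disjoint_right]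
      intro a hat hay
      exact (Finset.mem_compl.mp (ht hat)) (Finset.mem_union_right _ hay)
  -- Step B
  have hB : ∀ t : KV (2 * n + k) n, n + 1 ≤ (Z \ t.1).card → t ∈ C := by
    intro t htc
    obtain ⟨F, hFsub, hFcard⟩ :=
      Finset.exists_subset_card_eq (show n - 1 ≤ (Z \ t.1).card by omega)
    have hrest : 1 < ((Z \ t.1) \ F).card := by
      rw [Finset.card_sdiff_of_subset hFsub, hFcard]; omega
    obtain ⟨g1, hg1, g2, hg2, hgg⟩ := Finset.one_lt_card.mp hrest
    have hg1d := Finset.mem_sdiff.mp hg1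
    have hg2d := Finset.mem_sdiff.mp hg2
    have hg1Z := Finset.mem_sdiff.mp hg1d.1
    have hg2Z := Finset.mem_sdiff.mp hg2d.1
    have hc1 : (insert g1 F).card = n := by
      rw [Finset.card_insert_of_notMem hg1d.2, hFcard]; omega
    have hc2 : (insert g2 F).card = n := by
      rw [Finset.card_insert_of_notMem hg2d.2, hFcard]; omega
    have huC : (⟨insert g1 F, hc1⟩ : KV (2 * n + k) n) ∈ C := by
      apply hA
      intro a ha
      rcases Finset.mem_insert.mp ha with rfl | haF
      · exact hg1Z.1
      · exact (Finset.mem_sdiff.mp (hFsub haF)).1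
    have hvC : (⟨insert g2 F, hc2⟩ : KV (2 * n + k) n) ∈ C := by
      apply hA
      intro a ha
      rcases Finset.mem_insert.mp ha with rfl | haF
      · exact hg2Z.1
      · exact (Finset.mem_sdiff.mp (hFsub haF)).1
    refine kneser_swap hn hC hFcard hg1d.2 hg2d.2 hgg huC hvC rfl rfl t ?_ hg1Z.2 hg2Z.2
    rw [Finset.disjoint_right]
    intro a haF hat
    exact (Finset.mem_sdiff.mp (hFsub haF)).2 hat
  -- Main argument
  apply Set.eq_univ_of_forall
  intro w
  by_cases hcase : n + 1 ≤ (Z \ w.1).card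
  · exact hB w hcase
  push_neg at hcase
  have hZc : Zᶜ.card = n + 1 := by rw [hZ, compl_compl, hUcard]
  have hc2le : (Zᶜ \ w.1).card ≤ n + 1 := hZc ▸ Finset.card_le_card Finset.sdiff_subset
  have hsum : (Z \ w.1).card + (Zᶜ \ w.1).card = n + k := by
    have hdisj : Disjoint (Z \ w.1) (Zᶜ \ w.1) :=
      disjoint_compl_right.mono Finset.sdiff_subset Finset.sdiff_subset
    have h1 := Finset.card_union_of_disjoint hdisj
    rw [← Finset.union_sdiff_distrib, Finset.union_compl, ← Finset.compl_eq_univ_sdiff,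
        Finset.card_compl, w.2, Fintype.card_fin] at h1
    omega
  have hkn1 : k ≤ n + 1 := by omega
  obtain ⟨F0, hF0sub, hF0card⟩ :=
    Finset.exists_subset_card_eq (show n + 2 - k ≤ (Zᶜ \ w.1).card by omega)
  obtain ⟨G0, hG0sub, hG0card⟩ :=
    Finset.exists_subset_card_eq (show k - 3 ≤ (Z \ w.1).card by omega)
  have hrest : 1 < ((Z \ w.1) \ G0).card := by
    rw [Finset.card_sdiff_of_subset hG0sub, hG0card]; omega
  obtain ⟨g1, hg1, g2, hg2, hgg⟩ := Finset.one_lt_card.mp hrest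
  have hg1d := Finset.mem_sdiff.mp hg1
  have hg2d := Finset.mem_sdiff.mp hg2
  have hg1Z := Finset.mem_sdiff.mp hg1d.1
  have hg2Z := Finset.mem_sdiff.mp hg2d.1
  have hdisjFG : Disjoint F0 G0 := by
    rw [Finset.disjoint_left]
    intro a ha0 haG
    exact (Finset.mem_compl.mp (Finset.mem_sdiff.mp (hF0sub ha0)).1)
      (Finset.mem_sdiff.mp (hG0sub haG)).1
  have hFcard : (F0 ∪ G0).card = n - 1 := by
    rw [Finset.card_union_of_disjoint hdisjFG, hF0card, hG0card]; omega
  have hg1F : g1 ∉ F0 ∪ G0 := by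
    intro h
    rcases Finset.mem_union.mp h with h0 | hG
    · exact (Finset.mem_compl.mp (Finset.mem_sdiff.mp (hF0sub h0)).1) hg1Z.1
    · exact hg1d.2 hG
  have hg2F : g2 ∉ F0 ∪ G0 := by
    intro h
    rcases Finset.mem_union.mp h with h0 | hG
    · exact (Finset.mem_compl.mp (Finset.mem_sdiff.mp (hF0sub h0)).1) hg2Z.1
    · exact hg2d.2 hG
  have hc1 : (insert g1 (F0 ∪ G0)).card = n := by
    rw [Finset.card_insert_of_notMem hg1F, hFcard]; omega
  have hc2 : (insert g2 (F0 ∪ G0)).card = n := by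
    rw [Finset.card_insert_of_notMem hg2F, hFcard]; omega
  -- The two helper vertices are in C by step B
  have key : ∀ (g : Fin (2 * n + k)), g ∈ Z → g ∉ G0 →
      n + 1 ≤ (Z \ (insert g (F0 ∪ G0))).card := by
    intro g hgZ hgG0
    have hsubZ : insert g G0 ⊆ Z := by
      intro a ha
      rcases Finset.mem_insert.mp ha with rfl | haG
      · exact hgZ
      · exact (Finset.mem_sdiff.mp (hG0sub haG)).1
    have hsub2 : Z \ insert g G0 ⊆ Z \ insert g (F0 ∪ G0) := by
      intro a ha
      rw [Finset.mem_sdiff] at ha ⊢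
      refine ⟨ha.1, ?_⟩
      intro haF
      rcases Finset.mem_insert.mp haF with rfl | haF'
      · exact ha.2 (Finset.mem_insert_self _ _)
      · rcases Finset.mem_union.mp haF' with h0 | hG
        · exact (Finset.mem_compl.mp (Finset.mem_sdiff.mp (hF0sub h0)).1) ha.1
        · exact ha.2 (Finset.mem_insert_of_mem hG)
    have hcard3 : (Z \ insert g G0).card = n + 1 := by
      rw [Finset.card_sdiff_of_subset hsubZ, Finset.card_insert_of_notMem hgG0, hG0card, hZcard]
      omega
    exact hcard3 ▸ Finset.card_le_card hsub2
  have huC : (⟨insert g1 (F0 ∪ G0), hc1⟩ : KV (2 * n + k) n) ∈ C :=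
    hB _ (key g1 hg1Z.1 hg1d.2)
  have hvC : (⟨insert g2 (F0 ∪ G0), hc2⟩ : KV (2 * n + k) n) ∈ C :=
    hB _ (key g2 hg2Z.1 hg2d.2)
  refine kneser_swap hn hC hFcard hg1F hg2F hgg huC hvC rfl rfl w ?_ hg1Z.2 hg2Z.2
  rw [Finset.disjoint_right]
  intro a haF haw
  rcases Finset.mem_union.mp haF with h0 | hG
  · exact (Finset.mem_sdiff.mp (hF0sub h0)).2 haw
  · exact (Finset.mem_sdiff.mp (hG0sub hG)).2 haw
end

section
/- Let n ≥ 2 and k be positive integers with k ≥ n-1 and k ≤ 2. Then no two-element set of vertices of the Kneser graph K(2n+k,n) is a geodetic hull set; that is, for all vertices x and y, H[{x,y}] ≠ V(K(2n+k,n)). -/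
namespace KAux

variable {m n : ℕ}

lemma exists_disjoint (hn : 1 ≤ n) (t : Finset (Fin m)) (ht : t.card + n ≤ m) :
    ∃ w : {s : Finset (Fin m) // s.card = n}, Disjoint w.1 t ∧ w.1.Nonempty := by
  have h : n ≤ tᶜ.card := by
    rw [Finset.card_compl]; simp only [Fintype.card_fin]; omega
  obtain ⟨w, hw, hwc⟩ := Finset.exists_subset_card_eq h
  refine ⟨⟨w, hwc⟩, Finset.disjoint_left.mpr fun a ha => Finset.mem_compl.mp (hw ha), ?_⟩
  apply Finset.card_pos.mp
  rw [hwc]; omega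

lemma ne_of_disjoint (hn : 1 ≤ n) {u v : {s : Finset (Fin m) // s.card = n}}
    (h : Disjoint u.1 v.1) : u ≠ v := by
  intro he; subst he
  rw [disjoint_self] at h
  have := u.2
  rw [h] at this
  simp at this; omega

lemma exists_common (hn : 1 ≤ n) (hm : 3 * n ≤ m + 1)
    (u v : {s : Finset (Fin m) // s.card = n}) (h : ¬Disjoint u.1 v.1) :
    ∃ w : {s : Finset (Fin m) // s.card = n}, Disjoint w.1 u.1 ∧ Disjoint w.1 v.1 := by
  have hne : (u.1 ∩ v.1).Nonempty := Finset.not_disjoint_iff_nonempty_inter.mp h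
  have hcu : (u.1 ∪ v.1).card + (u.1 ∩ v.1).card = n + n := by
    rw [Finset.card_union_add_card_inter, u.2, v.2]
  have h1 : 1 ≤ (u.1 ∩ v.1).card := Finset.card_pos.mpr hne
  obtain ⟨w, hw, _⟩ := exists_disjoint hn (u.1 ∪ v.1) (by omega)
  exact ⟨w, (hw.mono_right Finset.subset_union_left),
    (hw.mono_right Finset.subset_union_right)⟩

lemma reach (hn : 1 ≤ n) (hm : 3 * n ≤ m + 1)
    (u v : {s : Finset (Fin m) // s.card = n}) : (KneserGraph m n).Reachable u v := by
  by_cases he : u = v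
  · subst he; exact SimpleGraph.Reachable.refl u
  by_cases hd : Disjoint u.1 v.1
  · exact SimpleGraph.Adj.reachable ⟨hd, he⟩
  obtain ⟨w, hw1, hw2⟩ := exists_common hn hm u v hd
  have a1 : (KneserGraph m n).Adj u w := ⟨hw1.symm, (ne_of_disjoint hn hw1).symm⟩
  have a2 : (KneserGraph m n).Adj w v := ⟨hw2, ne_of_disjoint hn hw2⟩
  exact a1.reachable.trans a2.reachable

lemma dist_le_two (hn : 1 ≤ n) (hm : 3 * n ≤ m + 1)
    (u v : {s : Finset (Fin m) // s.card = n}) : (KneserGraph m n).dist u v ≤ 2 := by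
  by_cases he : u = v
  · subst he; simp [SimpleGraph.dist_self]
  by_cases hd : Disjoint u.1 v.1
  · have : (KneserGraph m n).dist u v = 1 := SimpleGraph.dist_eq_one_iff_adj.mpr ⟨hd, he⟩
    omega
  obtain ⟨w, hw1, hw2⟩ := exists_common hn hm u v hd
  have a1 : (KneserGraph m n).Adj u w := ⟨hw1.symm, (ne_of_disjoint hn hw1).symm⟩
  have a2 : (KneserGraph m n).Adj w v := ⟨hw2, ne_of_disjoint hn hw2⟩
  have := SimpleGraph.dist_le (SimpleGraph.Walk.cons a1 (SimpleGraph.Walk.cons a2 SimpleGraph.Walk.nil))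
  simpa using this

lemma mem_interval (hn : 1 ≤ n) (hm : 3 * n ≤ m + 1)
    {u v w : {s : Finset (Fin m) // s.card = n}}
    (hw : w ∈ geodInterval (KneserGraph m n) u v) :
    w = u ∨ w = v ∨ ((KneserGraph m n).Adj u w ∧ (KneserGraph m n).Adj w v ∧
      u ≠ v ∧ ¬ Disjoint u.1 v.1) := by
  set G := KneserGraph m n with hG
  have hz : ∀ a b : {s : Finset (Fin m) // s.card = n}, G.dist a b = 0 → a = b :=
    fun a b h => (reach hn hm a b).dist_eq_zero_iff.mp h
  have hd2 : G.dist u v ≤ 2 := dist_le_two hn hm u v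
  have heq : G.dist u w + G.dist w v = G.dist u v := hw
  by_cases h1 : G.dist u w = 0
  · exact Or.inl (hz u w h1).symm
  by_cases h2 : G.dist w v = 0
  · exact Or.inr (Or.inl (hz w v h2))
  have e1 : G.dist u w = 1 := by omega
  have e2 : G.dist w v = 1 := by omega
  have hduv : G.dist u v = 2 := by omega
  refine Or.inr (Or.inr ⟨SimpleGraph.dist_eq_one_iff_adj.mp e1,
    SimpleGraph.dist_eq_one_iff_adj.mp e2, ?_, ?_⟩)
  · intro he; rw [he, SimpleGraph.dist_self] at hduv; omega
  · intro hd
    by_cases he : u = v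
    · rw [he, SimpleGraph.dist_self] at hduv; omega
    · have := SimpleGraph.dist_eq_one_iff_adj.mpr (show G.Adj u v from ⟨hd, he⟩)
      omega

lemma isGConvex_of (hn : 1 ≤ n) (hm : 3 * n ≤ m + 1)
    (C : Set {s : Finset (Fin m) // s.card = n})
    (h2 : ∀ u ∈ C, ∀ v ∈ C, u ≠ v → ¬Disjoint u.1 v.1 →
      ∀ w : {s : Finset (Fin m) // s.card = n},
        Disjoint w.1 u.1 → Disjoint w.1 v.1 → w ∈ C) :
    IsGConvex (KneserGraph m n) C := by
  unfold IsGConvex geodIntervalSet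
  ext w
  simp only [Set.mem_iUnion]
  constructor
  · rintro ⟨u, hu, v, hv, hw⟩
    rcases mem_interval hn hm hw with rfl | rfl | ⟨a1, a2, hne, hnd⟩
    · exact hu
    · exact hv
    · exact h2 u hu v hv hne hnd w a1.1.symm a2.1
  · intro hw
    exact ⟨w, hw, w, hw, by simp [geodInterval, SimpleGraph.dist_self]⟩

lemma hull_ne_univ_of {x y : {s : Finset (Fin m) // s.card = n}}
    (C : Set {s : Finset (Fin m) // s.card = n}) (hC : IsGConvex (KneserGraph m n) C)
    (hx : x ∈ C) (hy : y ∈ C) (z : {s : Finset (Fin m) // s.card = n}) (hz : z ∉ C) :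
    geodHull (KneserGraph m n) {x, y} ≠ Set.univ := by
  intro h
  have hsub : geodHull (KneserGraph m n) {x, y} ⊆ C :=
    Set.sInter_subset_of_mem ⟨hC, by rintro a (rfl | rfl) <;> assumption⟩
  rw [h] at hsub
  exact hz (hsub (Set.mem_univ z))



lemma case_eq (hn : 1 ≤ n) (hm : 3 * n ≤ m + 1) (x : {s : Finset (Fin m) // s.card = n}) :
    geodHull (KneserGraph m n) {x, x} ≠ Set.univ := by
  obtain ⟨z, hz, _⟩ := exists_disjoint hn x.1 (by rw [x.2]; omega)
  refine hull_ne_univ_of {x} ?_ rfl rfl z ?_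
  · exact isGConvex_of hn hm _ (by rintro u rfl v rfl hne _; exact absurd rfl hne)
  · intro h
    rw [Set.mem_singleton_iff] at h
    exact ne_of_disjoint hn hz h

lemma case_adj (hn : 2 ≤ n) (hm : 3 * n ≤ m + 1)
    (x y : {s : Finset (Fin m) // s.card = n}) (hxy : x ≠ y) (hd : Disjoint x.1 y.1) :
    geodHull (KneserGraph m n) {x, y} ≠ Set.univ := by
  -- build z intersecting both x and y
  obtain ⟨a, ha⟩ := Finset.card_pos.mp (show 0 < x.1.card by rw [x.2]; omega)
  obtain ⟨b, hb⟩ := Finset.card_pos.mp (show 0 < y.1.card by rw [y.2]; omega)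
  have hcu : (x.1 ∪ y.1).card = n + n := by
    rw [Finset.card_union_of_disjoint hd, x.2, y.2]
  have hcc : n - 2 ≤ (x.1 ∪ y.1)ᶜ.card := by
    rw [Finset.card_compl, hcu]; simp only [Fintype.card_fin]; omega
  obtain ⟨t, ht, htc⟩ := Finset.exists_subset_card_eq hcc
  have hbx : b ∉ x.1 := fun h => (Finset.disjoint_left.mp hd h) hb
  have hay : a ∉ y.1 := fun h => (Finset.disjoint_left.mp hd.symm h) ha
  have hat : a ∉ t := fun h => (Finset.mem_compl.mp (ht h)) (Finset.mem_union_left _ ha)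
  have hbt : b ∉ t := fun h => (Finset.mem_compl.mp (ht h)) (Finset.mem_union_right _ hb)
  have hab : a ≠ b := fun h => hbx (h ▸ ha)
  have hzc : (insert a (insert b t)).card = n := by
    rw [Finset.card_insert_of_notMem (by simp [hat, hab]),
      Finset.card_insert_of_notMem hbt, htc]; omega
  refine hull_ne_univ_of {x, y} ?_ (Or.inl rfl) (Or.inr rfl) ⟨_, hzc⟩ ?_
  · refine isGConvex_of (by omega) hm _ ?_
    rintro u (rfl | rfl) v (rfl | rfl) hne hnd w _ _
    · exact absurd rfl hne
    · exact absurd hd hnd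
    · exact absurd hd.symm hnd
    · exact absurd rfl hne
  · rintro (h | h)
    · exact hbx (show b ∈ x.1 by rw [← h]; simp)
    · exact hay (show a ∈ y.1 by rw [← h]; simp)

lemma case_A (hn : 2 ≤ n) (hm : 3 * n ≤ m + 1) (hm2 : m ≤ 2 * n + 2)
    (x y : {s : Finset (Fin m) // s.card = n}) (hxy : x ≠ y)
    (hcard : (x.1 ∪ y.1).card = n + 1) :
    geodHull (KneserGraph m n) {x, y} ≠ Set.univ := by
  set S := x.1 ∪ y.1 with hS
  have hScard : S.card = n + 1 := hcard
  have hSc : Sᶜ.card = m - (n + 1) := by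
    rw [Finset.card_compl, hScard]; simp
  -- the convex set
  set C : Set {s : Finset (Fin m) // s.card = n} :=
    {w | w.1 ⊆ S ∨ Disjoint w.1 S} with hC
  have key : ∀ u v : {s : Finset (Fin m) // s.card = n}, u ≠ v →
      u.1 ⊆ S → v.1 ⊆ S → u.1 ∪ v.1 = S := by
    intro u v hne hu hv
    have hle : n + 1 ≤ (u.1 ∪ v.1).card := by
      by_contra hlt
      push_neg at hlt
      have h1 : u.1 = u.1 ∪ v.1 :=
        Finset.eq_of_subset_of_card_le Finset.subset_union_left (by rw [u.2]; omega)
      have h2 : v.1 = u.1 ∪ v.1 :=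
        Finset.eq_of_subset_of_card_le Finset.subset_union_right (by rw [v.2]; omega)
      exact hne (Subtype.ext (h1.trans h2.symm))
    exact Finset.eq_of_subset_of_card_le (Finset.union_subset hu hv) (by omega)
  have keyc : ∀ u v : {s : Finset (Fin m) // s.card = n}, u ≠ v →
      u.1 ⊆ Sᶜ → v.1 ⊆ Sᶜ → u.1 ∪ v.1 = Sᶜ := by
    intro u v hne hu hv
    have hle : n + 1 ≤ (u.1 ∪ v.1).card := by
      by_contra hlt
      push_neg at hlt
      have h1 : u.1 = u.1 ∪ v.1 :=
        Finset.eq_of_subset_of_card_le Finset.subset_union_left (by rw [u.2]; omega)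
      have h2 : v.1 = u.1 ∪ v.1 :=
        Finset.eq_of_subset_of_card_le Finset.subset_union_right (by rw [v.2]; omega)
      exact hne (Subtype.ext (h1.trans h2.symm))
    exact Finset.eq_of_subset_of_card_le (Finset.union_subset hu hv) (by omega)
  have hconv : IsGConvex (KneserGraph m n) C := by
    refine isGConvex_of (by omega) hm _ ?_
    rintro u (hu | hu) v (hv | hv) hne hnd w hwu hwv
    · right
      have : u.1 ∪ v.1 = S := key u v hne hu hv
      rw [← this]
      exact Finset.disjoint_union_right.mpr ⟨hwu, hwv⟩
    · exact absurd (hv.mono_right hu).symm hnd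
    · exact absurd (hu.mono_right hv) hnd
    · left
      have hu' : u.1 ⊆ Sᶜ := fun a ha => Finset.mem_compl.mpr (Finset.disjoint_left.mp hu ha)
      have hv' : v.1 ⊆ Sᶜ := fun a ha => Finset.mem_compl.mpr (Finset.disjoint_left.mp hv ha)
      have huv : u.1 ∪ v.1 = Sᶜ := keyc u v hne hu' hv'
      intro a ha
      by_contra haS
      have : a ∈ Sᶜ := Finset.mem_compl.mpr haS
      rw [← huv] at this
      rcases Finset.mem_union.mp this with h | h
      · exact (Finset.disjoint_left.mp hwu ha) h
      · exact (Finset.disjoint_left.mp hwv ha) h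
  -- a vertex outside C
  obtain ⟨a, ha⟩ := Finset.card_pos.mp (show 0 < x.1.card by rw [x.2]; omega)
  have haS : a ∈ S := Finset.mem_union_left _ ha
  obtain ⟨t, ht, htc⟩ := Finset.exists_subset_card_eq
    (show n - 1 ≤ Sᶜ.card by omega)
  have hat : a ∉ t := fun h => (Finset.mem_compl.mp (ht h)) haS
  have hzc : (insert a t).card = n := by
    rw [Finset.card_insert_of_notMem hat, htc]; omega
  obtain ⟨b, hb⟩ := Finset.card_pos.mp (show 0 < t.card by omega)
  have hbS : b ∉ S := Finset.mem_compl.mp (ht hb)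
  refine hull_ne_univ_of C hconv (Or.inl Finset.subset_union_left)
    (Or.inl Finset.subset_union_right) ⟨_, hzc⟩ ?_
  rintro (h | h)
  · exact hbS (h (Finset.mem_insert_of_mem hb))
  · exact (Finset.disjoint_left.mp h (Finset.mem_insert_self a t)) haS

lemma case_B (hn : 3 ≤ n) (hm : 3 * n ≤ m + 1)
    (x y : {s : Finset (Fin m) // s.card = n}) (hxy : x ≠ y)
    (hci : 1 ≤ (x.1 ∩ y.1).card) (hci2 : (x.1 ∩ y.1).card ≤ n - 2)
    (hSc : (x.1 ∪ y.1)ᶜ.card = n) :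
    geodHull (KneserGraph m n) {x, y} ≠ Set.univ := by
  set c : {s : Finset (Fin m) // s.card = n} := ⟨(x.1 ∪ y.1)ᶜ, hSc⟩ with hc
  have hdxc : Disjoint x.1 c.1 := by
    simp only [hc]
    exact Finset.disjoint_left.mpr fun a ha h => (Finset.mem_compl.mp h) (Finset.mem_union_left _ ha)
  have hdyc : Disjoint y.1 c.1 := by
    simp only [hc]
    exact Finset.disjoint_left.mpr fun a ha h => (Finset.mem_compl.mp h) (Finset.mem_union_right _ ha)
  have hconv : IsGConvex (KneserGraph m n) ({x, y, c} : Set _) := by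
    refine isGConvex_of (by omega) hm _ ?_
    have main : ∀ w : {s : Finset (Fin m) // s.card = n},
        Disjoint w.1 x.1 → Disjoint w.1 y.1 → w = c := by
      intro w hwx hwy
      have hsub : w.1 ⊆ (x.1 ∪ y.1)ᶜ := by
        intro a ha
        refine Finset.mem_compl.mpr fun h => ?_
        rcases Finset.mem_union.mp h with h | h
        · exact (Finset.disjoint_left.mp hwx ha) h
        · exact (Finset.disjoint_left.mp hwy ha) h
      exact Subtype.ext (Finset.eq_of_subset_of_card_le hsub (by rw [hSc, w.2]))
    rintro u (rfl | rfl | rfl) v (rfl | rfl | rfl) hne hnd w hwu hwv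
    · exact absurd rfl hne
    · exact Or.inr (Or.inr (main w hwu hwv))
    · exact absurd hdxc hnd
    · exact Or.inr (Or.inr (main w hwv hwu))
    · exact absurd rfl hne
    · exact absurd hdyc hnd
    · exact absurd hdxc.symm hnd
    · exact absurd hdyc.symm hnd
    · exact absurd rfl hne
  -- vertex outside {x, y, c}
  obtain ⟨a, haxy⟩ := Finset.card_pos.mp (show 0 < (x.1 ∩ y.1).card by omega)
  have hax : a ∈ x.1 := (Finset.mem_inter.mp haxy).1
  have hay : a ∈ y.1 := (Finset.mem_inter.mp haxy).2
  have hdiff : 0 < (x.1 \ y.1).card := by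
    have hsum := Finset.card_sdiff_add_card_inter x.1 y.1
    have := x.2
    omega
  obtain ⟨d, hd⟩ := Finset.card_pos.mp hdiff
  have hdx : d ∈ x.1 := (Finset.mem_sdiff.mp hd).1
  have hdy : d ∉ y.1 := (Finset.mem_sdiff.mp hd).2
  obtain ⟨t, ht, htc⟩ := Finset.exists_subset_card_eq
    (show n - 2 ≤ (x.1 ∪ y.1)ᶜ.card by omega)
  have hat : a ∉ t := fun h => (Finset.mem_compl.mp (ht h)) (Finset.mem_union_left _ hax)
  have hdt : d ∉ t := fun h => (Finset.mem_compl.mp (ht h)) (Finset.mem_union_left _ hdx)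
  have had : a ≠ d := fun h => hdy (h ▸ hay)
  have hzc : (insert a (insert d t)).card = n := by
    rw [Finset.card_insert_of_notMem (by simp [hat, had]),
      Finset.card_insert_of_notMem hdt, htc]; omega
  obtain ⟨b, hb⟩ := Finset.card_pos.mp (show 0 < t.card by omega)
  have hbx : b ∉ x.1 := fun h => (Finset.mem_compl.mp (ht hb)) (Finset.mem_union_left _ h)
  refine hull_ne_univ_of _ hconv (Or.inl rfl) (Or.inr (Or.inl rfl)) ⟨_, hzc⟩ ?_
  rintro (h | h | h)
  · exact hbx (show b ∈ x.1 by rw [← h]; simp [hb])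
  · exact hdy (show d ∈ y.1 by rw [← h]; simp)
  · rw [Set.mem_singleton_iff] at h
    have h2 : insert a (insert d t) = (x.1 ∪ y.1)ᶜ := congrArg Subtype.val h
    have : a ∈ (x.1 ∪ y.1)ᶜ := by rw [← h2]; simp
    exact (Finset.mem_compl.mp this) (Finset.mem_union_left _ hax)

end KAux

theorem no_pair_isGeodHullSet_of_k_le_two
    (n k : ℕ) (hn : 2 ≤ n) (hk : 0 < k) (hkn : n - 1 ≤ k) (hk2 : k ≤ 2) :
    ∀ x y : {s : Finset (Fin (2 * n + k)) // s.card = n},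
      geodHull (KneserGraph (2 * n + k) n) {x, y} ≠ Set.univ := by
  intro x y
  have hm : 3 * n ≤ (2 * n + k) + 1 := by omega
  by_cases hxy : x = y
  · subst hxy; exact KAux.case_eq (by omega) hm x
  by_cases hd : Disjoint x.1 y.1
  · exact KAux.case_adj hn hm x y hxy hd
  have hci : 1 ≤ (x.1 ∩ y.1).card :=
    Finset.card_pos.mpr (Finset.not_disjoint_iff_nonempty_inter.mp hd)
  have hcu : (x.1 ∪ y.1).card + (x.1 ∩ y.1).card = n + n := by
    rw [Finset.card_union_add_card_inter, x.2, y.2]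
  have hcin : (x.1 ∩ y.1).card ≤ n - 1 := by
    by_contra h
    push_neg at h
    have hle : (x.1 ∩ y.1).card ≤ n := by
      have := Finset.card_le_card (show x.1 ∩ y.1 ⊆ x.1 from Finset.inter_subset_left)
      rw [x.2] at this; exact this
    have h1 : x.1 ∩ y.1 = x.1 :=
      Finset.eq_of_subset_of_card_le Finset.inter_subset_left (by rw [x.2]; omega)
    have h2 : x.1 ∩ y.1 = y.1 :=
      Finset.eq_of_subset_of_card_le Finset.inter_subset_right (by rw [y.2]; omega)
    exact hxy (Subtype.ext (h1.symm.trans h2))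
  by_cases hA : (x.1 ∩ y.1).card = n - 1
  · exact KAux.case_A hn hm (by omega) x y hxy (by omega)
  · have hn3 : 3 ≤ n := by omega
    have hSc : (x.1 ∪ y.1)ᶜ.card = n := by
      rw [Finset.card_compl]; simp only [Fintype.card_fin]; omega
    exact KAux.case_B hn3 hm x y hxy hci (by omega) hSc
end

section
/- Let n and k be positive integers, let r be a vertex of the Kneser graph K(2n+k,n), and let x be a vertex with dist(r,x) < diam(K(2n+k,n)). Then x has a neighbor z in K(2n+k,n) with dist(r,z) = dist(r,x) + 1. -/
namespace KneserAux
def cdiv (m k : ℕ) : ℕ := (m + k - 1) / k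
lemma cdiv_le_iff {k : ℕ} (hk : 0 < k) {m q : ℕ} : cdiv m k ≤ q ↔ m ≤ q * k := by
  unfold cdiv; rw [Nat.div_le_iff_le_mul_add_pred hk, mul_comm]; omega
lemma lt_cdiv_iff {k : ℕ} (hk : 0 < k) {m q : ℕ} : q < cdiv m k ↔ q * k < m := by
  rw [← not_le, ← not_le, cdiv_le_iff hk]
lemma le_cdiv_mul {k : ℕ} (hk : 0 < k) (m : ℕ) : m ≤ cdiv m k * k := (cdiv_le_iff hk).mp le_rfl
lemma cdiv_zero {k : ℕ} (hk : 0 < k) : cdiv 0 k = 0 := by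
  have := (cdiv_le_iff hk (m := 0) (q := 0)).mpr (by simp); omega
lemma cdiv_eq_zero_iff {k : ℕ} (hk : 0 < k) {m : ℕ} : cdiv m k = 0 ↔ m = 0 := by
  constructor
  · intro h
    have := (cdiv_le_iff hk (m := m) (q := 0)).mp (by omega)
    simpa using this
  · rintro rfl; exact cdiv_zero hk

lemma pred_mul {b k : ℕ} (hb : 0 < b) : (b - 1) * k + k = b * k := by
  rw [Nat.sub_mul, one_mul]
  have hkb : k ≤ b * k := by
    calc k = 1 * k := (one_mul k).symm
    _ ≤ b * k := Nat.mul_le_mul_right k hb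
  omega

def gfun (n k s : ℕ) : ℕ := min (2 * cdiv (n - s) k) (2 * cdiv s k + 1)

lemma gfun_zero {n k : ℕ} (hn : 0 < n) (hk : 0 < k) : gfun n k 0 = 1 := by
  unfold gfun; rw [Nat.sub_zero, cdiv_zero hk]
  have : 0 < cdiv n k := by rw [lt_cdiv_iff hk]; omega
  omega
lemma gfun_self {n k : ℕ} (hk : 0 < k) : gfun n k n = 0 := by
  unfold gfun; rw [Nat.sub_self, cdiv_zero hk]; simp

lemma gfun_eq_zero {n k s : ℕ} (hk : 0 < k) (hs : s ≤ n) (h : gfun n k s = 0) : s = n := by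
  unfold gfun at h
  have h1 : 2 * cdiv (n - s) k = 0 := by omega
  have := (cdiv_eq_zero_iff hk (m := n - s)).mp (by omega)
  omega

lemma cdiv_eq {k m q : ℕ} (hk : 0 < k) (h1 : q * k < m + k) (h2 : m ≤ q * k) : cdiv m k = q := by
  have ha : cdiv m k ≤ q := (cdiv_le_iff hk).mpr h2
  rcases Nat.eq_zero_or_pos q with rfl | hq
  · rw [zero_mul] at h2
    exact le_antisymm ha (Nat.zero_le _)
  · have hb : q - 1 < cdiv m k := by
      rw [lt_cdiv_iff hk]
      have := pred_mul (k := k) hq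
      omega
    omega

/-- one step of a walk changes `gfun` by at most one -/
lemma g_step {n k s t : ℕ} (hk : 0 < k) (h1 : s + t ≤ n) (h2 : n ≤ s + t + k) :
    gfun n k s ≤ gfun n k t + 1 := by
  rcases le_or_gt (2 * cdiv (n - t) k) (2 * cdiv t k + 1) with hc | hc
  · have ht : gfun n k t = 2 * cdiv (n - t) k := min_eq_left hc
    have hb : cdiv s k ≤ cdiv (n - t) k := by
      rw [cdiv_le_iff hk]
      calc s ≤ n - t := by omega
        _ ≤ cdiv (n - t) k * k := le_cdiv_mul hk _
    calc gfun n k s ≤ 2 * cdiv s k + 1 := min_le_right _ _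
      _ ≤ 2 * cdiv (n - t) k + 1 := by omega
      _ = gfun n k t + 1 := by omega
  · have ht : gfun n k t = 2 * cdiv t k + 1 := min_eq_right (by omega)
    have hb : cdiv (n - s) k ≤ cdiv t k + 1 := by
      rw [cdiv_le_iff hk, add_mul, one_mul]
      have := le_cdiv_mul hk t
      omega
    calc gfun n k s ≤ 2 * cdiv (n - s) k := min_le_left _ _
      _ ≤ 2 * (cdiv t k + 1) := by omega
      _ = gfun n k t + 1 := by omega

/-- descent: from positive distance we can step one closer -/
lemma g_descent {n k s : ℕ} (hn : 0 < n) (hk : 0 < k) (hs : s ≤ n)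
    (hpos : 0 < gfun n k s) :
    ∃ t, t ≤ n ∧ s + t ≤ n ∧ n ≤ s + t + k ∧ gfun n k t + 1 = gfun n k s := by
  set a := cdiv (n - s) k with ha
  set b := cdiv s k with hb
  rcases le_or_gt (2 * a) (2 * b + 1) with hc | hc
  · -- even case, gfun s = 2a, a ≥ 1
    have hgs : gfun n k s = 2 * a := min_eq_left hc
    have hapos : 0 < a := by omega
    have hale : a ≤ b := by omega
    have hns1 : n - s ≤ a * k := le_cdiv_mul hk _
    have hns2 : (a - 1) * k < n - s := (lt_cdiv_iff hk).mp (by omega)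
    have ea : (a - 1) * k + k = a * k := pred_mul hapos
    rcases Nat.lt_or_ge a 2 with h1 | h2
    · -- a = 1 : t = 0
      refine ⟨0, by omega, by omega, ?_, ?_⟩
      · have : a = 1 := by omega
        rw [this, one_mul] at hns1; omega
      · rw [gfun_zero hn hk]; omega
    · -- a ≥ 2 : t = n - s - k
      have hbpos : 0 < b := by omega
      have hbk : (b - 1) * k < s := (lt_cdiv_iff hk).mp (by omega)
      have eb : (b - 1) * k + k = b * k := pred_mul hbpos
      have ea2 : (a - 2) * k + k = (a - 1) * k := by
        have : a - 2 = (a - 1) - 1 := by omega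
        rw [this]; exact pred_mul (by omega)
      have hmono : (a - 1) * k ≤ (b - 1) * k := Nat.mul_le_mul_right _ (by omega)
      refine ⟨n - s - k, by omega, by omega, by omega, ?_⟩
      have hc1 : cdiv (n - s - k) k = a - 1 := cdiv_eq hk (by omega) (by omega)
      have hsk : n - (n - s - k) = s + k := by omega
      have hc2 : a ≤ cdiv (s + k) k := by
        have h' : a - 1 < cdiv (s + k) k := by
          rw [lt_cdiv_iff hk]; omega
        omega
      have hgt : gfun n k (n - s - k) = 2 * a - 1 := by
        unfold gfun
        rw [hsk, hc1]
        omega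
      omega
  · -- odd case, gfun s = 2b + 1
    have hgs : gfun n k s = 2 * b + 1 := min_eq_right (by omega)
    rcases Nat.eq_zero_or_pos b with hb0 | hbpos
    · have hs0 : s = 0 := by
        have := (cdiv_eq_zero_iff hk (m := s)).mp (by omega)
        omega
      exact ⟨n, le_rfl, by omega, by omega, by rw [gfun_self hk]; omega⟩
    · -- t = n - b * k
      have hbk1 : s ≤ b * k := le_cdiv_mul hk _
      have hbk2 : (b - 1) * k < s := (lt_cdiv_iff hk).mp (by omega)
      have hbka : b * k < n - s := (lt_cdiv_iff hk).mp (by omega)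
      have eb : (b - 1) * k + k = b * k := pred_mul hbpos
      refine ⟨n - b * k, by omega, by omega, by omega, ?_⟩
      have hnt : n - (n - b * k) = b * k := by omega
      have hc1 : cdiv (b * k) k = b := cdiv_eq hk (by omega) le_rfl
      have hc2 : b ≤ cdiv (n - b * k) k := by
        have h' : b - 1 < cdiv (n - b * k) k := by
          rw [lt_cdiv_iff hk]; omega
        omega
      have hgt : gfun n k (n - b * k) = 2 * b := by
        unfold gfun
        rw [hnt, hc1]
        omega
      omega

/-- every value of gfun is at most `cdiv (n-1) k + 1` -/
lemma g_le {n k s : ℕ} (hn : 0 < n) (hk : 0 < k) (hs : s ≤ n) :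
    gfun n k s ≤ cdiv (n - 1) k + 1 := by
  set c := cdiv (n - 1) k with hc
  set b := cdiv s k with hb
  rcases le_or_gt (2 * b + 1) (c + 1) with h | h
  · calc gfun n k s ≤ 2 * b + 1 := min_le_right _ _
      _ ≤ c + 1 := h
  · have hbpos : 0 < b := by omega
    have hbk : (b - 1) * k < s := (lt_cdiv_iff hk).mp (by omega)
    have hck : n - 1 ≤ c * k := le_cdiv_mul hk _
    have eb : (b - 1) * k + k = b * k := pred_mul hbpos
    have hble : b ≤ c + 1 := by
      rw [hb, cdiv_le_iff hk, add_mul, one_mul]; omega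
    have hq : cdiv (n - s) k ≤ c + 1 - b := by
      rw [cdiv_le_iff hk, Nat.sub_mul, add_mul, one_mul]
      have hm : b * k ≤ (c + 1) * k := Nat.mul_le_mul_right _ hble
      rw [add_mul, one_mul] at hm
      omega
    calc gfun n k s ≤ 2 * cdiv (n - s) k := min_le_left _ _
      _ ≤ 2 * (c + 1 - b) := by omega
      _ ≤ c + 1 := by omega

/-- ascent: if not at maximal distance we can step one farther -/
lemma g_ascent {n k s : ℕ} (hn : 0 < n) (hk : 0 < k) (hs : s ≤ n)
    (hlt : gfun n k s ≤ cdiv (n - 1) k) :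
    ∃ t, t ≤ n ∧ s + t ≤ n ∧ n ≤ s + t + k ∧ gfun n k t = gfun n k s + 1 := by
  set c := cdiv (n - 1) k with hc
  set a := cdiv (n - s) k with ha
  set b := cdiv s k with hb
  rcases Nat.eq_zero_or_pos (gfun n k s) with hg0 | hgpos
  · -- s = n, take t = 0
    have hsn : s = n := gfun_eq_zero hk hs hg0
    exact ⟨0, by omega, by omega, by omega, by rw [gfun_zero hn hk, hg0]⟩
  rcases le_or_gt (2 * a) (2 * b + 1) with hcs | hcs
  · -- even case: gfun s = 2a, a ≥ 1, t = (a-1)*k + 1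
    have hgs : gfun n k s = 2 * a := min_eq_left hcs
    have hapos : 0 < a := by omega
    have hale : a ≤ b := by omega
    have hns1 : n - s ≤ a * k := le_cdiv_mul hk _
    have hns2 : (a - 1) * k < n - s := (lt_cdiv_iff hk).mp (by omega)
    have ea : (a - 1) * k + k = a * k := pred_mul hapos
    have hnk : (2 * a - 1) * k < n - 1 := (lt_cdiv_iff hk).mp (by omega)
    have e2 : (2 * a - 1) * k + k = 2 * a * k := pred_mul (by omega)
    have e3 : a * k + a * k = 2 * a * k := by rw [← Nat.add_mul]; congr 1; omega
    refine ⟨(a - 1) * k + 1, by omega, by omega, by omega, ?_⟩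
    have hct : cdiv ((a - 1) * k + 1) k = a := cdiv_eq hk (by omega) (by omega)
    have hct2 : a + 1 ≤ cdiv (n - ((a - 1) * k + 1)) k := by
      have h' : a < cdiv (n - ((a - 1) * k + 1)) k := by
        rw [lt_cdiv_iff hk]; omega
      omega
    unfold gfun
    rw [hct]
    omega
  · -- odd case: gfun s = 2b+1, t = n - b*k - 1
    have hgs : gfun n k s = 2 * b + 1 := min_eq_right (by omega)
    have hsb : s ≤ b * k := le_cdiv_mul hk _
    have hnk : 2 * b * k < n - 1 := (lt_cdiv_iff hk).mp (by omega)
    have e2 : b * k + b * k = 2 * b * k := by rw [← Nat.add_mul]; congr 1; omega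
    have hsbk : b * k < s + k := by
      rcases Nat.eq_zero_or_pos b with h | h
      · rw [h]; simp; omega
      · have h1 : (b - 1) * k < s := (lt_cdiv_iff hk).mp (by omega)
        have := pred_mul (k := k) h
        omega
    refine ⟨n - b * k - 1, by omega, by omega, by omega, ?_⟩
    have hnt : n - (n - b * k - 1) = b * k + 1 := by omega
    have hct : cdiv (b * k + 1) k = b + 1 := by
      apply cdiv_eq hk
      · rw [add_mul, one_mul]; omega
      · rw [add_mul, one_mul]; omega
    have hct2 : b + 1 ≤ cdiv (n - b * k - 1) k := by
      have h' : b < cdiv (n - b * k - 1) k := by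
        rw [lt_cdiv_iff hk]; omega
      omega
    unfold gfun
    rw [hnt, hct]
    omega

end KneserAux

namespace KneserAux

open Finset SimpleGraph

variable {n k : ℕ}

/-- vertex type of the Kneser graph -/
abbrev KV (n k : ℕ) := {s : Finset (Fin (2 * n + k)) // s.card = n}

lemma inter_card_le (r v : KV n k) : (r.1 ∩ v.1).card ≤ n := by
  calc (r.1 ∩ v.1).card ≤ r.1.card := card_le_card inter_subset_left
    _ = n := r.2

instance : Nonempty (KV n k) := by
  obtain ⟨s, -, hs⟩ := exists_subset_card_eq
    (show n ≤ (univ : Finset (Fin (2 * n + k))).card by simp; omega)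
  exact ⟨⟨s, hs⟩⟩

/-- adjacency controls intersection sizes with any fixed `r` -/
lemma adj_inter_bounds (r v z : KV n k) (h : (KneserGraph (2 * n + k) n).Adj v z) :
    (r.1 ∩ v.1).card + (r.1 ∩ z.1).card ≤ n ∧
      n ≤ (r.1 ∩ v.1).card + (r.1 ∩ z.1).card + k := by
  obtain ⟨hdisj, -⟩ := h
  have hd : Disjoint (r.1 ∩ v.1) (r.1 ∩ z.1) :=
    hdisj.mono inter_subset_right inter_subset_right
  have hcup : (r.1 ∩ v.1).card + (r.1 ∩ z.1).card = ((r.1 ∩ v.1) ∪ (r.1 ∩ z.1)).card :=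
    (card_union_of_disjoint hd).symm
  constructor
  · rw [hcup]
    calc ((r.1 ∩ v.1) ∪ (r.1 ∩ z.1)).card ≤ r.1.card :=
        card_le_card (union_subset inter_subset_left inter_subset_left)
      _ = n := r.2
  · have hsub : r.1 ⊆ ((r.1 ∩ v.1) ∪ (r.1 ∩ z.1)) ∪ (v.1 ∪ z.1)ᶜ := by
      intro x hx
      simp only [mem_union, mem_inter, mem_compl]
      by_cases hv : x ∈ v.1
      · exact Or.inl (Or.inl ⟨hx, hv⟩)
      · by_cases hz : x ∈ z.1
        · exact Or.inl (Or.inr ⟨hx, hz⟩)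
        · exact Or.inr (by simp [hv, hz])
    have hcompl : ((v.1 ∪ z.1)ᶜ : Finset (Fin (2 * n + k))).card = k := by
      rw [card_compl, card_union_of_disjoint hdisj, v.2, z.2]
      simp only [Fintype.card_fin]
      omega
    calc n = r.1.card := r.2.symm
      _ ≤ (((r.1 ∩ v.1) ∪ (r.1 ∩ z.1)) ∪ (v.1 ∪ z.1)ᶜ).card := card_le_card hsub
      _ ≤ ((r.1 ∩ v.1) ∪ (r.1 ∩ z.1)).card + ((v.1 ∪ z.1)ᶜ).card := card_union_le _ _
      _ = (r.1 ∩ v.1).card + (r.1 ∩ z.1).card + k := by rw [← hcup, hcompl]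

/-- lifting: any admissible intersection size is realized by a neighbour of `v` -/
lemma exists_neighbor_inter (hn : 0 < n) (r v : KV n k) (t : ℕ)
    (h1 : (r.1 ∩ v.1).card + t ≤ n) (h2 : n ≤ (r.1 ∩ v.1).card + t + k) :
    ∃ z : KV n k, (KneserGraph (2 * n + k) n).Adj v z ∧ (r.1 ∩ z.1).card = t := by
  set s := (r.1 ∩ v.1).card with hs
  have hrv : (r.1 \ v.1).card = n - s := by
    have := card_inter_add_card_sdiff r.1 v.1
    rw [r.2] at this; omega
  obtain ⟨u1, hu1sub, hu1card⟩ := exists_subset_card_eq (show t ≤ (r.1 \ v.1).card by omega)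
  have hvc : ((v.1ᶜ : Finset (Fin (2 * n + k))) \ r.1).card = k + s := by
    have h1' : (v.1ᶜ ∩ r.1 : Finset (Fin (2 * n + k))) = r.1 \ v.1 := by
      ext x; simp only [mem_inter, mem_compl, mem_sdiff]; tauto
    have h2' : (v.1ᶜ : Finset (Fin (2 * n + k))).card = n + k := by
      rw [card_compl, v.2, Fintype.card_fin]; omega
    have h3' := card_inter_add_card_sdiff (v.1ᶜ : Finset (Fin (2 * n + k))) r.1
    rw [h2', h1', hrv] at h3'
    omega
  obtain ⟨u2, hu2sub, hu2card⟩ := exists_subset_card_eq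
    (show n - t ≤ ((v.1ᶜ : Finset (Fin (2 * n + k))) \ r.1).card by omega)
  have hu1r : u1 ⊆ r.1 := hu1sub.trans sdiff_subset
  have hu2r : Disjoint u2 r.1 := disjoint_of_subset_left hu2sub sdiff_disjoint
  have hd12 : Disjoint u1 u2 := (hu2r.mono_right hu1r).symm
  have hcard : (u1 ∪ u2).card = n := by
    rw [card_union_of_disjoint hd12, hu1card, hu2card]; omega
  have hdis : Disjoint v.1 (u1 ∪ u2) := by
    rw [disjoint_union_right]
    exact ⟨(disjoint_of_subset_left hu1sub sdiff_disjoint).symm,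
      disjoint_compl_right.mono_right (hu2sub.trans sdiff_subset)⟩
  refine ⟨⟨u1 ∪ u2, hcard⟩, ⟨hdis, fun hvz => ?_⟩, ?_⟩
  · -- v ≠ z
    have hv1 : v.1 = u1 ∪ u2 := congrArg Subtype.val hvz
    have hdv : Disjoint v.1 v.1 := hv1 ▸ hdis
    have hve : v.1 = ∅ := disjoint_self.mp hdv
    have hvn := v.2
    rw [hve, card_empty] at hvn
    omega
  · -- r ∩ (u1 ∪ u2) = u1
    have : r.1 ∩ (u1 ∪ u2) = u1 := by
      ext x
      simp only [mem_inter, mem_union]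
      constructor
      · rintro ⟨hr, hx | hx⟩
        · exact hx
        · exact absurd hr (disjoint_left.mp hu2r hx)
      · intro hx
        exact ⟨hu1r hx, Or.inl hx⟩
    rw [this, hu1card]

end KneserAux

namespace KneserAux

open Finset SimpleGraph

variable {n k : ℕ}

lemma walk_lower (hk : 0 < k) (r v : KV n k)
    (p : (KneserGraph (2 * n + k) n).Walk v r) :
    gfun n k ((r.1 ∩ v.1).card) ≤ p.length := by
  induction p with
  | @nil u =>
    rw [inter_self, u.2, gfun_self hk]
    exact Nat.zero_le _
  | @cons a b c h q ih =>
    obtain ⟨hb1, hb2⟩ := adj_inter_bounds c a b h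
    have := g_step (n := n) hk hb1 hb2
    simp only [SimpleGraph.Walk.length_cons]
    omega

lemma exists_walk (hn : 0 < n) (hk : 0 < k) (r : KV n k) :
    ∀ m (v : KV n k), gfun n k ((r.1 ∩ v.1).card) = m →
      ∃ p : (KneserGraph (2 * n + k) n).Walk r v, p.length = m := by
  intro m
  induction m with
  | zero =>
    intro v hv
    have hcard : (r.1 ∩ v.1).card = n := gfun_eq_zero hk (inter_card_le r v) hv
    have h1 : r.1 ∩ v.1 = r.1 :=
      eq_of_subset_of_card_le inter_subset_left (by rw [hcard, r.2])
    have h2 : r.1 ⊆ v.1 := by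
      intro x hx
      have : x ∈ r.1 ∩ v.1 := h1.symm ▸ hx
      exact (mem_inter.mp this).2
    have h3 : r.1 = v.1 := eq_of_subset_of_card_le h2 (by rw [r.2, v.2])
    have : r = v := Subtype.ext h3
    subst this
    exact ⟨SimpleGraph.Walk.nil, rfl⟩
  | succ m ih =>
    intro v hv
    obtain ⟨t, ht, h1, h2, hgt⟩ := g_descent hn hk (inter_card_le r v) (by omega)
    obtain ⟨z, hadj, hz⟩ := exists_neighbor_inter hn r v t (by omega) (by omega)
    obtain ⟨p, hp⟩ := ih z (by rw [hz]; omega)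
    exact ⟨p.concat hadj.symm, by rw [SimpleGraph.Walk.length_concat, hp]⟩

lemma dist_eq (hn : 0 < n) (hk : 0 < k) (r v : KV n k) :
    (KneserGraph (2 * n + k) n).dist r v = gfun n k ((r.1 ∩ v.1).card) := by
  obtain ⟨p, hp⟩ := exists_walk hn hk r _ v rfl
  apply le_antisymm
  · exact hp ▸ SimpleGraph.dist_le p
  · have hreach : (KneserGraph (2 * n + k) n).Reachable r v := ⟨p⟩
    obtain ⟨q, hq⟩ := hreach.exists_walk_length_eq_dist
    calc gfun n k ((r.1 ∩ v.1).card) ≤ q.reverse.length := walk_lower hk r v q.reverse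
      _ = q.length := SimpleGraph.Walk.length_reverse q
      _ = _ := hq

lemma diam_le (hn : 0 < n) (hk : 0 < k) :
    (KneserGraph (2 * n + k) n).diam ≤ cdiv (n - 1) k + 1 := by
  obtain ⟨u, v, huv⟩ := SimpleGraph.exists_dist_eq_diam (G := KneserGraph (2 * n + k) n)
  rw [← huv, dist_eq hn hk]
  exact g_le hn hk (inter_card_le u v)

end KneserAux


theorem exists_neighbor_farther_from_root
    (n k : ℕ) (hn : 0 < n) (hk : 0 < k)
    (r x : {s : Finset (Fin (2 * n + k)) // s.card = n})
    (h : (KneserGraph (2 * n + k) n).dist r x < (KneserGraph (2 * n + k) n).diam) :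
    ∃ z : {s : Finset (Fin (2 * n + k)) // s.card = n}, (KneserGraph (2 * n + k) n).Adj x z ∧
      (KneserGraph (2 * n + k) n).dist r z = (KneserGraph (2 * n + k) n).dist r x + 1 := by

  classical
  open KneserAux in
  have hdx := dist_eq hn hk r x
  have hdiam := KneserAux.diam_le (n := n) (k := k) hn hk
  have hle : gfun n k ((r.1 ∩ x.1).card) ≤ cdiv (n - 1) k := by omega
  obtain ⟨t, ht, h1, h2, hgt⟩ :=
    g_ascent hn hk (KneserAux.inter_card_le r x) hle
  obtain ⟨z, hadj, hz⟩ := exists_neighbor_inter hn r x t (by omega) (by omega)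
  refine ⟨z, hadj, ?_⟩
  rw [dist_eq hn hk r z, hz, hgt, hdx]
end
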